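/- Let X be a flow (continuous ℝ-action) and X^r the associated r-exterior flow, whose externology ε^r(X) consists of open sets N such that for every x ∈ X there is r₀ with (r₀,∞)·x ⊂ N. Then the limit space L(X^r) = ∩_{E ∈ ε^r(X)} E is an invariant subset of the flow, and the induced flow on the end space Ě(X^r) is trivial. -/

import Mathlib

open Set Topology Filter

universe u v

/-- An externology on a topological space: a nonempty family of open subsets closed under
finite intersections and under open supersets. -/
structure Externology (X : Type u) [TopologicalSpace X] where
  sets : Set (Set X)
  nonempty' : sets.Nonempty
  isOpen' : ∀ E ∈ sets, IsOpen E
  inter' : ∀ E ∈ sets, ∀ F ∈ sets, E ∩ F ∈ sets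
  superset' : ∀ E ∈ sets, ∀ U : Set X, IsOpen U → E ⊆ U → U ∈ sets

variable {X : Type u} {Y : Type v} [TopologicalSpace X] [TopologicalSpace Y]

/-- The limit space `L(X)` of an exterior space: the intersection of all exterior open sets. -/
def Elimit (ε : Externology X) : Set X := ⋂₀ ε.sets

/-- `V` is a `q₀`-saturated open subset of `E`: an open subset of `E` which is a union of
path-components of `E`. -/
def IsQSatOpen (E V : Set X) : Prop :=
  V ⊆ E ∧ IsOpen V ∧ ∀ x ∈ V, pathComponentIn E x ⊆ V

/-- An end point of an exterior space: a compatible choice of a path-component of each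
exterior open subset. -/
structure EndPt (ε : Externology X) where
  comp : Set X → Set X
  isComp' : ∀ E ∈ ε.sets, ∃ x ∈ E, comp E = pathComponentIn E x
  mono' : ∀ E ∈ ε.sets, ∀ F ∈ ε.sets, E ⊆ F → comp E ⊆ comp F

/-- The inverse limit topology on the end space. -/
instance EndPt.instTopologicalSpace (ε : Externology X) : TopologicalSpace (EndPt ε) :=
  .generateFrom {S | ∃ E ∈ ε.sets, ∃ V : Set X, IsQSatOpen E V ∧
    S = {a : EndPt ε | a.comp E ⊆ V}}

/-- The canonical map `e₀ : L(X) → Ě(X)` sending a point of the limit space to the family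
of its path-components. -/
def endOf (ε : Externology X) (x : Elimit ε) : EndPt ε where
  comp E := pathComponentIn E (x : X)
  isComp' E hE := ⟨(x : X), x.2 E hE, rfl⟩
  mono' _E _hE _F _hF h := pathComponentIn_mono h

/-- The gluing relation of the push-out `X ∪_{L(X)} Ě(X)`. -/
inductive CompletionRel (ε : Externology X) : X ⊕ EndPt ε → X ⊕ EndPt ε → Prop
  | glue (x : Elimit ε) : CompletionRel ε (Sum.inl (x : X)) (Sum.inr (endOf ε x))

/-- The underlying set of the completion: the push-out `X ∪_{L(X)} Ě(X)`. -/
def CompletionPts (ε : Externology X) : Type u := Quot (CompletionRel ε)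

/-- The canonical map `p₀ : X → X ∪_{L(X)} Ě(X)`. -/
def p0 (ε : Externology X) : X → CompletionPts ε := fun x => Quot.mk _ (Sum.inl x)

/-- The canonical map `incl₀ : Ě(X) → X ∪_{L(X)} Ě(X)`. -/
def incl0 (ε : Externology X) : EndPt ε → CompletionPts ε := fun a => Quot.mk _ (Sum.inr a)

/-- The family `𝒢₀` of subsets of the push-out `X ∪_{L(X)} Ě(X)`: `W ∈ 𝒢₀` iff `p₀⁻¹ W` is
open in `X`, `incl₀⁻¹ W` is open in `Ě(X)`, and each end `a ∈ incl₀⁻¹ W` admits `E ∈ ε(X)`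
and an open `G ⊆ π₀(E)` (encoded by the saturated open set `V = q₀⁻¹ G ⊆ E`) with
`a ∈ η₀⁻¹ G ⊆ incl₀⁻¹ W` and `q₀⁻¹ G ⊆ p₀⁻¹ W`. -/
def G0 (ε : Externology X) : Set (Set (CompletionPts ε)) :=
  {W | IsOpen (p0 ε ⁻¹' W) ∧ IsOpen {a : EndPt ε | incl0 ε a ∈ W} ∧
    ∀ a : EndPt ε, incl0 ε a ∈ W →
      ∃ E ∈ ε.sets, ∃ V : Set X, IsQSatOpen E V ∧ a.comp E ⊆ V ∧
        (∀ b : EndPt ε, b.comp E ⊆ V → incl0 ε b ∈ W) ∧ ∀ x ∈ V, p0 ε x ∈ W}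

/-- The topology `𝒢₀` on the completion. -/
instance CompletionPts.instTopologicalSpace (ε : Externology X) :
    TopologicalSpace (CompletionPts ε) := .generateFrom (G0 ε)

/-- The basic exterior subset `W₀(E) = p₀(E) ∪ incl₀(Ě(X))` of the completion. -/
def W0 (ε : Externology X) (E : Set X) : Set (CompletionPts ε) :=
  p0 ε '' E ∪ Set.range (incl0 ε)

lemma W0_mono (ε : Externology X) {E F : Set X} (h : E ⊆ F) : W0 ε E ⊆ W0 ε F :=
  union_subset_union_left _ (image_mono h)

/-- The externology of the completion `Č₀(X)`, with base `{W₀(E) | E ∈ ε(X)}`. -/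
def completionExternology (ε : Externology X) : Externology (CompletionPts ε) where
  sets := {U | IsOpen U ∧ ∃ E ∈ ε.sets, W0 ε E ⊆ U}
  nonempty' := by
    obtain ⟨E, hE⟩ := ε.nonempty'
    exact ⟨univ, isOpen_univ, E, hE, subset_univ _⟩
  isOpen' := fun U hU => hU.1
  inter' := by
    rintro U ⟨hUo, E, hE, hEU⟩ V ⟨hVo, F, hF, hFV⟩
    refine ⟨hUo.inter hVo, E ∩ F, ε.inter' E hE F hF, ?_⟩
    exact subset_inter ((W0_mono ε inter_subset_left).trans hEU)
      ((W0_mono ε inter_subset_right).trans hFV)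
  superset' := by
    rintro U ⟨hUo, E, hE, hEU⟩ V hVo hUV
    exact ⟨hVo, E, hE, hEU.trans hUV⟩

/-- An exterior map between exterior spaces. -/
def IsExteriorMap (εX : Externology X) (εY : Externology Y) (f : X → Y) : Prop :=
  Continuous f ∧ ∀ E ∈ εY.sets, f ⁻¹' E ∈ εX.sets

/-- An isomorphism of exterior spaces. -/
def IsExteriorIso (εX : Externology X) (εY : Externology Y) (f : X → Y) : Prop :=
  IsExteriorMap εX εY f ∧ ∃ g : Y → X, IsExteriorMap εY εX g ∧ g ∘ f = id ∧ f ∘ g = id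

/-- An exterior space is `Č₀`-complete if the canonical map `p₀ : X → Č₀(X)` is an
isomorphism of exterior spaces. -/
def C0Complete (ε : Externology X) : Prop :=
  IsExteriorIso ε (completionExternology ε) (p0 ε)

/-- A `π₀`-`ε(X)`-net: a net eventually contained in a single path-component of every
exterior open set. -/
def IsPi0Net {D : Type*} [Preorder D] (ε : Externology X) (u : D → X) : Prop :=
  ∀ E ∈ ε.sets, ∃ C : Set X, (∃ y ∈ E, C = pathComponentIn E y) ∧ ∀ᶠ δ in atTop, u δ ∈ C

/-- The `r`-exterior externology of a flow: open sets absorbing every positive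
semi-trajectory. -/
def rExt (φ : Flow ℝ X) : Externology X where
  sets := {N | IsOpen N ∧ ∀ x : X, ∃ r₀ : ℝ, ∀ t : ℝ, r₀ < t → φ t x ∈ N}
  nonempty' := ⟨univ, isOpen_univ, fun _ => ⟨0, fun _ _ => mem_univ _⟩⟩
  isOpen' := fun _ hN => hN.1
  inter' := by
    rintro N ⟨hNo, hN⟩ M ⟨hMo, hM⟩
    refine ⟨hNo.inter hMo, fun x => ?_⟩
    obtain ⟨r, hr⟩ := hN x
    obtain ⟨s, hs⟩ := hM x
    exact ⟨max r s, fun t ht =>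
      ⟨hr t ((le_max_left r s).trans_lt ht), hs t ((le_max_right r s).trans_lt ht)⟩⟩
  superset' := by
    rintro N ⟨_, hN⟩ U hUo hNU
    exact ⟨hUo, fun x => (hN x).imp fun r h t ht => hNU (h t ht)⟩

/-- The `ω^r`-limit set of a point for a flow. -/
def omegaR (φ : Flow ℝ X) (x : X) : Set X :=
  ⋂ t : ℝ, closure ((fun s : ℝ => φ s x) '' Ici t)

/-- The set of critical (rest) points of a flow. -/
def criticalSet (φ : Flow ℝ X) : Set X := {x | ∀ r : ℝ, φ r x = x}

/-- The set of periodic points of a flow. -/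
def periodicSet (φ : Flow ℝ X) : Set X := {x | ∃ r : ℝ, r ≠ 0 ∧ φ r x = x}

/-- The global `Ω^r`-limit of a flow. -/
def OmegaRSet (φ : Flow ℝ X) : Set X := ⋃ x : X, omegaR φ x

/-- The compatibility conditions making an exterior space with a flow an `r`-exterior flow:
`φ : ℝ^r ×̄ M_d → M` is exterior and each `F_t : M ×̄ I → M`, `F_t(x,s) = φ(ts, x)`,
is exterior. -/
structure IsRExteriorFlow (ε : Externology X) (φ : Flow ℝ X) : Prop where
  absorb : ∀ E ∈ ε.sets, ∀ x : X, ∃ r₀ : ℝ, ∀ t : ℝ, r₀ < t → φ t x ∈ E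
  homotopyExt : ∀ t : ℝ, ∀ E ∈ ε.sets, ∃ G ∈ ε.sets, ∀ x ∈ G, ∀ s ∈ Icc (0:ℝ) 1,
    φ (t * s) x ∈ E

/-- for a flow `φ` with its `r`-exterior externology, the limit space
`L(X^r)` is invariant, and the induced flow on the end space is trivial (the map induced
by each `φ_s` on compatible families of path-components is the identity). -/
theorem stmt_16 (φ : Flow ℝ X) :
    (∀ x ∈ Elimit (rExt φ), ∀ t : ℝ, φ t x ∈ Elimit (rExt φ)) ∧
      (∀ s : ℝ, ∀ a : EndPt (rExt φ), ∀ E ∈ (rExt φ).sets,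
        ∀ x ∈ a.comp ((fun y => φ s y) ⁻¹' E),
          pathComponentIn E (φ s x) = a.comp E) := by
  -- preimages under φ_s are again r-exterior
  have hpre : ∀ s : ℝ, ∀ E ∈ (rExt φ).sets, (fun y => φ s y) ⁻¹' E ∈ (rExt φ).sets := by
    rintro s E ⟨hEo, hE⟩
    refine ⟨hEo.preimage (φ.continuous continuous_const continuous_id), fun x => ?_⟩
    obtain ⟨r, hr⟩ := hE x
    refine ⟨r - s, fun t ht => ?_⟩
    have : φ (s + t) x ∈ E := hr (s + t) (by linarith)
    simpa [φ.map_add] using this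
  constructor
  · intro x hx t
    intro N hN
    exact hx _ (hpre t N hN)
  · intro s a E hE x hx
    -- G : points whose whole segment [0,s]-orbit stays in E
    set G : Set X := {y | ∀ u ∈ Icc (0:ℝ) 1, φ (s * u) y ∈ E} with hG
    have hGsets : G ∈ (rExt φ).sets := by
      obtain ⟨hEo, hE'⟩ := hE
      constructor
      · rw [isOpen_iff_forall_mem_open]
        intro y hy
        have hc : Continuous fun p : X × ℝ => φ (s * p.2) p.1 :=
          φ.continuous (continuous_const.mul continuous_snd) continuous_fst
        have hsub : ({y} : Set X) ×ˢ Icc (0:ℝ) 1 ⊆ (fun p : X × ℝ => φ (s * p.2) p.1) ⁻¹' E := by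
          rintro ⟨z, u⟩ ⟨hz, hu⟩
          rcases hz with rfl
          exact hy u hu
        obtain ⟨U, V, hUo, _, hyU, hIV, hUV⟩ :=
          generalized_tube_lemma isCompact_singleton isCompact_Icc
            (hEo.preimage hc) hsub
        refine ⟨U, fun z hz u hu => ?_, hUo, hyU rfl⟩
        have hm : (z, u) ∈ U ×ˢ V := ⟨hz, hIV hu⟩
        exact hUV hm
      · intro y
        obtain ⟨r, hr⟩ := hE' y
        refine ⟨r + |s|, fun t ht u hu => ?_⟩
        have : φ (s * u) (φ t y) = φ (s * u + t) y := (φ.map_add _ _ _).symm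
        rw [this]
        apply hr
        have h1 : |s * u| ≤ |s| := by
          rw [abs_mul]
          calc |s| * |u| ≤ |s| * 1 := by
                have : |u| ≤ 1 := abs_le.mpr ⟨by linarith [hu.1], hu.2⟩
                exact mul_le_mul_of_nonneg_left this (abs_nonneg s)
            _ = |s| := mul_one _
        have := neg_abs_le (s * u)
        linarith [neg_abs_le (s * u), abs_le.mp (le_refl |s * u|)]
    have hGE : G ⊆ E := fun y hy => by simpa using hy 0 ⟨le_refl 0, zero_le_one⟩
    set F : Set X := (fun y => φ s y) ⁻¹' E with hF
    have hFsets : F ∈ (rExt φ).sets := hpre s E hE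
    have hGF : G ⊆ F := fun y hy => by
      have := hy 1 ⟨zero_le_one, le_refl 1⟩
      simpa [hF] using this
    -- pick a representative of a.comp G
    obtain ⟨w, hwG, hw⟩ := a.isComp' G hGsets
    have hwmem : w ∈ a.comp G := hw ▸ mem_pathComponentIn_self hwG
    have hwF : w ∈ a.comp F := a.mono' G hGsets F hFsets hGF hwmem
    have hwE : w ∈ a.comp E := a.mono' G hGsets E hE hGE hwmem
    -- a.comp F, a.comp E as path components
    obtain ⟨y, hyF, hyeq⟩ := a.isComp' F hFsets
    obtain ⟨z, hzE, hzeq⟩ := a.isComp' E hE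
    -- x and w are joined in F
    have hxw : JoinedIn F x w := by
      have hx' : x ∈ pathComponentIn F y := hyeq ▸ hx
      have hw' : w ∈ pathComponentIn F y := hyeq ▸ hwF
      exact hx'.symm.trans hw'
    -- push the path via φ_s : JoinedIn E (φ s x) (φ s w)
    obtain ⟨γ, hγ⟩ := hxw
    have h1 : JoinedIn E (φ s x) (φ s w) := by
      refine ⟨γ.map (φ.continuous continuous_const continuous_id), fun t => ?_⟩
      exact hγ t
    -- path from w to φ s w in E via the flow segment
    have h2 : JoinedIn E w (φ s w) := by
      refine ⟨⟨⟨fun u => φ (s * (u : ℝ)) w, ?_⟩, ?_, ?_⟩, fun t => hwG t t.2⟩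
      · exact φ.continuous (continuous_const.mul continuous_subtype_val) continuous_const
      · show φ (s * ((0 : unitInterval) : ℝ)) w = w
        simp [φ.map_zero_apply]
      · show φ (s * ((1 : unitInterval) : ℝ)) w = φ s w
        simp
    have h3 : JoinedIn E (φ s x) w := h1.trans h2.symm
    -- conclude
    have hwz : pathComponentIn E w = pathComponentIn E z := pathComponentIn_congr (hzeq ▸ hwE)
    calc pathComponentIn E (φ s x) = pathComponentIn E w :=
          (pathComponentIn_congr h3).symm ▸ rfl
      _ = a.comp E := by rw [hwz, hzeq]
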